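/- For the Nil Ricci flow solution A(t)=A₀(3kt+1)^{-1/3}, B(t)=B₀(3kt+1)^{1/3}, C(t)=C₀(3kt+1)^{1/3} with k = A₀/(B₀C₀), the quantity t·max(|A/(4BC)|, |3A/(4BC)|) stays bounded as t → ∞; i.e., each sectional curvature of the solution decays like 1/t (the solution is Type III). -/

import Mathlib

/-- For the Nil Ricci flow solution `A(t) = A₀(3kt+1)^{-1/3}`, `B(t) = B₀(3kt+1)^{1/3}`,
`C(t) = C₀(3kt+1)^{1/3}` with `k = A₀/(B₀C₀)`, the quantity
`t · max(|A/(4BC)|, |3A/(4BC)|)` stays bounded for `t ≥ 0`: the sectional curvatures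
decay like `1/t`, i.e. the solution is Type III. -/
theorem nil_ricci_flow_typeIII (A₀ B₀ C₀ : ℝ) (hA : 0 < A₀) (hB : 0 < B₀) (hC : 0 < C₀) :
    let k := A₀ / (B₀ * C₀)
    let A : ℝ → ℝ := fun t => A₀ * (3 * k * t + 1) ^ (-(1 / 3) : ℝ)
    let B : ℝ → ℝ := fun t => B₀ * (3 * k * t + 1) ^ ((1 / 3) : ℝ)
    let C : ℝ → ℝ := fun t => C₀ * (3 * k * t + 1) ^ ((1 / 3) : ℝ)
    ∃ M : ℝ, ∀ t : ℝ, 0 ≤ t →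
      t * max |A t / (4 * B t * C t)| |3 * A t / (4 * B t * C t)| ≤ M := by
  intro k A B C
  have hk : 0 < k := div_pos hA (mul_pos hB hC)
  refine ⟨1/4, fun t ht => ?_⟩
  have hu : (0:ℝ) < 3 * k * t + 1 := by positivity
  set u : ℝ := 3 * k * t + 1 with hudef
  have hp : (0:ℝ) < u ^ ((1:ℝ)/3) := Real.rpow_pos_of_pos hu _
  have hn : (0:ℝ) < u ^ (-(1/3):ℝ) := Real.rpow_pos_of_pos hu _
  have h2 : u ^ (-(1/3):ℝ) * u ^ (1:ℝ) = u ^ ((1:ℝ)/3) * u ^ ((1:ℝ)/3) := by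
    rw [← Real.rpow_add hu, ← Real.rpow_add hu]
    norm_num
  have h3 : u ^ ((-1)/3:ℝ) * u = u ^ ((1:ℝ)/3) * u ^ ((1:ℝ)/3) := by
    have : ((-1)/3:ℝ) = -(1/3) := by norm_num
    rw [this]
    simpa [Real.rpow_one] using h2
  have key : ∀ c : ℝ, c * A t / (4 * B t * C t) = c * k / (4 * u) := by
    intro c
    show c * (A₀ * u ^ (-(1/3):ℝ)) / (4 * (B₀ * u ^ ((1:ℝ)/3)) * (C₀ * u ^ ((1:ℝ)/3)))
        = c * (A₀ / (B₀ * C₀)) / (4 * u)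
    rw [div_eq_div_iff (by positivity) (by positivity)]
    have hBC : B₀ * C₀ ≠ 0 := by positivity
    have e := div_mul_cancel₀ A₀ hBC
    have h2' := h2
    rw [Real.rpow_one] at h2'
    linear_combination (4 * c * A₀) * h2' - (4 * c * u ^ ((1:ℝ)/3) * u ^ ((1:ℝ)/3)) * e
  have key1 : A t / (4 * B t * C t) = k / (4 * u) := by
    have := key 1; simpa using this
  rw [key1, key 3]
  have hkk : k / (4 * u) ≤ 3 * k / (4 * u) := by
    apply div_le_div_of_nonneg_right ?_ (by positivity)
    · linarith
  rw [abs_of_pos (by positivity : (0:ℝ) < k / (4*u)),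
      abs_of_pos (by positivity : (0:ℝ) < 3 * k / (4*u)), max_eq_right hkk]
  rw [show t * (3 * k / (4 * u)) = 3 * k * t / (4 * u) from by ring,
      div_le_iff₀ (by positivity)]
  nlinarith [hudef.le, hudef.ge]
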